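/- arXiv:2509.01737 — 4 statements merged into one kernel-verified Lean document; each statement's English description precedes it below -/
import Mathlib

section
/- Let (Ω, ℱ, P) be a probability space and 𝒯 ⊆ ℱ a sub-σ-algebra. Let α̂ and β̂ be square-integrable real random variables and set α := E[α̂ | 𝒯] and β := E[β̂ | 𝒯]. Suppose v_α, v_β, v_αβ are integrable real random variables satisfying, almost surely, E[v_α | 𝒯] = E[(α̂ − α)² | 𝒯], E[v_β | 𝒯] = E[(β̂ − β)² | 𝒯], and E[v_αβ | 𝒯] = E[(α̂ − α)(β̂ − β) | 𝒯]. Then E[(β − α)²] = E[(β̂ − α̂)²] − E[v_β + v_α − 2·v_αβ]. -/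
open MeasureTheory ProbabilityTheory

/-- Product of two `ℒ²` functions is integrable (real case, via polarization). -/
lemma integrable_mul_of_memL2 {Ω : Type*} {mΩ : MeasurableSpace Ω} {P : Measure Ω}
    {f g : Ω → ℝ} (hf : MemLp f 2 P) (hg : MemLp g 2 P) :
    Integrable (fun ω => f ω * g ω) P := by
  have h : Integrable (fun ω =>
      (((f + g) ω) ^ 2 - (f ω) ^ 2 - (g ω) ^ 2) * (1 / 2)) P :=
    (((hf.add hg).integrable_sq.sub hf.integrable_sq).sub hg.integrable_sq).mul_const _
  refine h.congr (Filter.Eventually.of_forall fun ω => ?_)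
  simp only [Pi.add_apply]
  ring

/-- The conditional expectation of an `ℒ²` function is `ℒ²`. -/
lemma memL2_condexp {Ω : Type*} {m mΩ : MeasurableSpace Ω} {P : Measure Ω}
    [IsFiniteMeasure P] (hm : m ≤ mΩ) {f : Ω → ℝ}
    (hf : MemLp f 2 P) : MemLp (P[f|m]) 2 P := by
  set g : Lp ℝ 2 P := (condExpL2 ℝ ℝ hm (hf.toLp f) : Lp ℝ 2 P) with hg
  have h : (g : Ω → ℝ) =ᵐ[P] P[f|m] := by
    refine ae_eq_condExp_of_forall_setIntegral_eq hm (hf.integrable one_le_two)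
      (fun s _ hμs =>
        integrableOn_Lp_of_measure_ne_top (μ := P) g fact_one_le_two_ennreal.elim hμs.ne)
      (fun s hs hμs => ?_) ?_
    · rw [hg, integral_condExpL2_eq hm (hf.toLp f) hs hμs.ne]
      exact setIntegral_congr_ae (hm s hs) (hf.coeFn_toLp.mono fun x hx _ => hx)
    · rw [hg]
      exact lpMeas.aestronglyMeasurable _
  exact (Lp.memLp _).ae_eq h

/-- Identification of the prediction-error variance `E[(β − α)²]` in the
meta-analytic framework: with `α := E[α̂ | 𝒯]`, `β := E[β̂ | 𝒯]`, and
conditionally unbiased within-trial (co)variance estimates `v_α, v_β, v_αβ`,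
one has `E[(β − α)²] = E[(β̂ − α̂)²] − E[v_β + v_α − 2 v_αβ]`. -/
theorem prediction_error_variance_identification
    {Ω : Type*} {mΩ : MeasurableSpace Ω} (P : Measure Ω) [IsProbabilityMeasure P]
    (𝒯 : MeasurableSpace Ω) (h𝒯 : 𝒯 ≤ mΩ)
    (αhat βhat : Ω → ℝ) (hαhat : MemLp αhat 2 P) (hβhat : MemLp βhat 2 P)
    (vα vβ vαβ : Ω → ℝ)
    (hvα : Integrable vα P) (hvβ : Integrable vβ P) (hvαβ : Integrable vαβ P)
    (hvα' : P[vα|𝒯] =ᵐ[P]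
      P[(fun ω => (αhat ω - (P[αhat|𝒯]) ω) ^ 2)|𝒯])
    (hvβ' : P[vβ|𝒯] =ᵐ[P]
      P[(fun ω => (βhat ω - (P[βhat|𝒯]) ω) ^ 2)|𝒯])
    (hvαβ' : P[vαβ|𝒯] =ᵐ[P]
      P[(fun ω => (αhat ω - (P[αhat|𝒯]) ω) * (βhat ω - (P[βhat|𝒯]) ω))|𝒯]) :
    ∫ ω, ((P[βhat|𝒯]) ω - (P[αhat|𝒯]) ω) ^ 2 ∂P =
      (∫ ω, (βhat ω - αhat ω) ^ 2 ∂P)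
        - ∫ ω, (vβ ω + vα ω - 2 * vαβ ω) ∂P := by
  set α : Ω → ℝ := P[αhat|𝒯] with hα_def
  set β : Ω → ℝ := P[βhat|𝒯] with hβ_def
  have hα2 : MemLp α 2 P := memL2_condexp h𝒯 hαhat
  have hβ2 : MemLp β 2 P := memL2_condexp h𝒯 hβhat
  have hA : MemLp (fun ω => αhat ω - α ω) 2 P := hαhat.sub hα2
  have hB : MemLp (fun ω => βhat ω - β ω) 2 P := hβhat.sub hβ2
  have hg2 : MemLp (fun ω => β ω - α ω) 2 P := hβ2.sub hα2
  have hA_int : Integrable (fun ω => (αhat ω - α ω) ^ 2) P := hA.integrable_sq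
  have hB_int : Integrable (fun ω => (βhat ω - β ω) ^ 2) P := hB.integrable_sq
  have hAB_int : Integrable (fun ω => (αhat ω - α ω) * (βhat ω - β ω)) P :=
    integrable_mul_of_memL2 hA hB
  -- Step 1: expectations of the variance estimates
  have key : ∀ (v : Ω → ℝ) (w : Ω → ℝ), P[v|𝒯] =ᵐ[P] P[w|𝒯] →
      ∫ ω, v ω ∂P = ∫ ω, w ω ∂P := by
    intro v w h
    rw [← integral_condExp h𝒯 (f := v), ← integral_condExp h𝒯 (f := w)]
    exact integral_congr_ae h
  have h1 : ∫ ω, vα ω ∂P = ∫ ω, (αhat ω - α ω) ^ 2 ∂P := key _ _ hvα'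
  have h2 : ∫ ω, vβ ω ∂P = ∫ ω, (βhat ω - β ω) ^ 2 ∂P := key _ _ hvβ'
  have h3 : ∫ ω, vαβ ω ∂P = ∫ ω, (αhat ω - α ω) * (βhat ω - β ω) ∂P := key _ _ hvαβ'
  -- Step 2: cross term vanishes
  have hD : MemLp (fun ω => (βhat ω - β ω) - (αhat ω - α ω)) 2 P := hB.sub hA
  have hgD_int : Integrable (fun ω => (β ω - α ω) *
      ((βhat ω - β ω) - (αhat ω - α ω))) P := integrable_mul_of_memL2 hg2 hD
  have hD_condexp : P[(fun ω => (βhat ω - β ω) - (αhat ω - α ω))|𝒯] =ᵐ[P] 0 := by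
    have hβc : P[β|𝒯] = β :=
      condExp_of_stronglyMeasurable h𝒯 stronglyMeasurable_condExp integrable_condExp
    have hαc : P[α|𝒯] = α :=
      condExp_of_stronglyMeasurable h𝒯 stronglyMeasurable_condExp integrable_condExp
    have e1 : P[(fun ω => (βhat ω - β ω) - (αhat ω - α ω))|𝒯] =ᵐ[P]
        P[(fun ω => βhat ω - β ω)|𝒯] - P[(fun ω => αhat ω - α ω)|𝒯] :=
      condExp_sub ((hβhat.integrable one_le_two).sub integrable_condExp)
        ((hαhat.integrable one_le_two).sub integrable_condExp) 𝒯
    have e2 : P[(fun ω => βhat ω - β ω)|𝒯] =ᵐ[P] P[βhat|𝒯] - P[β|𝒯] :=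
      condExp_sub (hβhat.integrable one_le_two) integrable_condExp 𝒯
    have e3 : P[(fun ω => αhat ω - α ω)|𝒯] =ᵐ[P] P[αhat|𝒯] - P[α|𝒯] :=
      condExp_sub (hαhat.integrable one_le_two) integrable_condExp 𝒯
    filter_upwards [e1, e2, e3] with ω he1 he2 he3
    simp only [Pi.sub_apply, Pi.zero_apply] at *
    rw [he1, he2, he3, hβc, hαc]
    simp [hα_def, hβ_def]
  have hcross : ∫ ω, (β ω - α ω) * ((βhat ω - β ω) - (αhat ω - α ω)) ∂P = 0 := by
    have hmeas : StronglyMeasurable[𝒯] (fun ω => β ω - α ω) :=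
      stronglyMeasurable_condExp.sub stronglyMeasurable_condExp
    have hpull := condExp_mul_of_stronglyMeasurable_left (μ := P) (m := 𝒯) hmeas
      (show Integrable ((fun ω => β ω - α ω) *
        fun ω => (βhat ω - β ω) - (αhat ω - α ω)) P from hgD_int)
      (hD.integrable one_le_two)
    have h0 : (P[((fun ω => β ω - α ω) *
        fun ω => (βhat ω - β ω) - (αhat ω - α ω))|𝒯]) =ᵐ[P] 0 := by
      refine hpull.trans ?_
      filter_upwards [hD_condexp] with ω hω
      simp only [Pi.mul_apply, Pi.zero_apply] at *
      rw [hω, mul_zero]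
    calc ∫ ω, (β ω - α ω) * ((βhat ω - β ω) - (αhat ω - α ω)) ∂P
        = ∫ ω, (P[((fun ω => β ω - α ω) *
            fun ω => (βhat ω - β ω) - (αhat ω - α ω))|𝒯]) ω ∂P :=
          (integral_condExp h𝒯).symm
      _ = 0 := by rw [integral_congr_ae h0]; exact integral_zero _ _
  -- Step 3: expansion of ∫ (β̂ - α̂)²
  have hgsq_int : Integrable (fun ω => (β ω - α ω) ^ 2) P := hg2.integrable_sq
  have hDsq_int : Integrable (fun ω => ((βhat ω - β ω) - (αhat ω - α ω)) ^ 2) P :=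
    hD.integrable_sq
  have expand : ∫ ω, (βhat ω - αhat ω) ^ 2 ∂P =
      (∫ ω, (β ω - α ω) ^ 2 ∂P)
        + (∫ ω, ((βhat ω - β ω) - (αhat ω - α ω)) ^ 2 ∂P)
        + 2 * ∫ ω, (β ω - α ω) * ((βhat ω - β ω) - (αhat ω - α ω)) ∂P := by
    calc ∫ ω, (βhat ω - αhat ω) ^ 2 ∂P
        = ∫ ω, ((β ω - α ω) ^ 2 + ((βhat ω - β ω) - (αhat ω - α ω)) ^ 2
            + 2 * ((β ω - α ω) * ((βhat ω - β ω) - (αhat ω - α ω)))) ∂P :=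
          integral_congr_ae (Filter.Eventually.of_forall fun ω => by ring)
      _ = (∫ ω, ((β ω - α ω) ^ 2 + ((βhat ω - β ω) - (αhat ω - α ω)) ^ 2) ∂P)
            + ∫ ω, 2 * ((β ω - α ω) * ((βhat ω - β ω) - (αhat ω - α ω))) ∂P :=
          integral_add (hgsq_int.add hDsq_int) (hgD_int.const_mul 2)
      _ = ((∫ ω, (β ω - α ω) ^ 2 ∂P)
            + (∫ ω, ((βhat ω - β ω) - (αhat ω - α ω)) ^ 2 ∂P))
            + ∫ ω, 2 * ((β ω - α ω) * ((βhat ω - β ω) - (αhat ω - α ω))) ∂P :=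
          congrArg (· + _) (integral_add hgsq_int hDsq_int)
      _ = (∫ ω, (β ω - α ω) ^ 2 ∂P)
            + (∫ ω, ((βhat ω - β ω) - (αhat ω - α ω)) ^ 2 ∂P)
            + 2 * ∫ ω, (β ω - α ω) * ((βhat ω - β ω) - (αhat ω - α ω)) ∂P :=
          congrArg (_ + ·) (integral_const_mul 2 _)
  -- Step 4: expansion of ∫ D²
  have hDsq : ∫ ω, ((βhat ω - β ω) - (αhat ω - α ω)) ^ 2 ∂P =
      (∫ ω, (βhat ω - β ω) ^ 2 ∂P) + (∫ ω, (αhat ω - α ω) ^ 2 ∂P)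
        - 2 * ∫ ω, (αhat ω - α ω) * (βhat ω - β ω) ∂P := by
    calc ∫ ω, ((βhat ω - β ω) - (αhat ω - α ω)) ^ 2 ∂P
        = ∫ ω, ((βhat ω - β ω) ^ 2 + (αhat ω - α ω) ^ 2
            - 2 * ((αhat ω - α ω) * (βhat ω - β ω))) ∂P :=
          integral_congr_ae (Filter.Eventually.of_forall fun ω => by ring)
      _ = (∫ ω, ((βhat ω - β ω) ^ 2 + (αhat ω - α ω) ^ 2) ∂P)
            - ∫ ω, 2 * ((αhat ω - α ω) * (βhat ω - β ω)) ∂P :=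
          integral_sub (hB_int.add hA_int) (hAB_int.const_mul 2)
      _ = ((∫ ω, (βhat ω - β ω) ^ 2 ∂P) + ∫ ω, (αhat ω - α ω) ^ 2 ∂P)
            - ∫ ω, 2 * ((αhat ω - α ω) * (βhat ω - β ω)) ∂P :=
          congrArg (· - _) (integral_add hB_int hA_int)
      _ = (∫ ω, (βhat ω - β ω) ^ 2 ∂P) + (∫ ω, (αhat ω - α ω) ^ 2 ∂P)
            - 2 * ∫ ω, (αhat ω - α ω) * (βhat ω - β ω) ∂P :=
          congrArg (_ - ·) (integral_const_mul 2 _)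
  -- Step 5: expectation of the variance-estimate combination
  have hv : ∫ ω, (vβ ω + vα ω - 2 * vαβ ω) ∂P =
      (∫ ω, (βhat ω - β ω) ^ 2 ∂P) + (∫ ω, (αhat ω - α ω) ^ 2 ∂P)
        - 2 * ∫ ω, (αhat ω - α ω) * (βhat ω - β ω) ∂P := by
    calc ∫ ω, (vβ ω + vα ω - 2 * vαβ ω) ∂P
        = (∫ ω, (vβ ω + vα ω) ∂P) - ∫ ω, 2 * vαβ ω ∂P :=
          integral_sub (hvβ.add hvα) (hvαβ.const_mul 2)
      _ = ((∫ ω, vβ ω ∂P) + ∫ ω, vα ω ∂P) - ∫ ω, 2 * vαβ ω ∂P :=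
          congrArg (· - _) (integral_add hvβ hvα)
      _ = ((∫ ω, vβ ω ∂P) + ∫ ω, vα ω ∂P) - 2 * ∫ ω, vαβ ω ∂P :=
          congrArg (_ - ·) (integral_const_mul 2 _)
      _ = _ := by rw [h1, h2, h3]
  rw [expand, hDsq, hv, hcross]
  ring
end

section
/- Let (Ω, ℱ, P) be a probability space with Ω a standard Borel space, let X : Ω → 𝒳 and S : Ω → 𝒮 be measurable maps into measurable spaces, let Z : Ω → {0,1} be measurable, and let Y : Ω → ℝ be bounded and measurable. Let 𝒢 denote the σ-algebra generated by ω ↦ (X(ω), S(ω)), and write E[Y | 𝒢] for the conditional expectation of Y given 𝒢 (the surrogate index g₀(X,S)). If Y and Z are conditionally independent given 𝒢, then for every z ∈ {0,1} one has ∫_{{Z = z}} Y dP = ∫_{{Z = z}} E[Y | 𝒢] dP; consequently, if P(Z=1) > 0 and P(Z=0) > 0, then for every function f : ℝ × ℝ → ℝ, f(E[Y | Z=1], E[Y | Z=0]) = f(E[E[Y|𝒢] | Z=1], E[E[Y|𝒢] | Z=0]), where E[W | Z=z] := P(Z=z)⁻¹ ∫_{{Z=z}} W dP. -/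
open MeasureTheory ProbabilityTheory

lemma pull_out_integral' {Ω : Type*} [mΩ : MeasurableSpace Ω]
    (P : Measure Ω) [IsProbabilityMeasure P] {𝒢 : MeasurableSpace Ω}
    (h𝒢 : 𝒢 ≤ mΩ)
    {g f : Ω → ℝ} (hg : StronglyMeasurable[𝒢] g) {c : ℝ}
    (hgb : ∀ᵐ ω ∂P, ‖g ω‖ ≤ c) (hf : Integrable f P) :
    ∫ ω, g ω * f ω ∂P = ∫ ω, g ω * (P[f|𝒢]) ω ∂P := by
  have hint : Integrable (g * f) P :=
    hf.bdd_mul ((hg.mono h𝒢).aestronglyMeasurable) hgb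
  have h1 : P[g * f|𝒢] =ᵐ[P] g * P[f|𝒢] :=
    condExp_stronglyMeasurable_mul_of_bound h𝒢 hg hf c hgb
  calc ∫ ω, g ω * f ω ∂P = ∫ ω, (g * f) ω ∂P := rfl
    _ = ∫ ω, (P[g * f|𝒢]) ω ∂P := (integral_condExp h𝒢 (f := g * f)).symm
    _ = ∫ ω, (g * P[f|𝒢]) ω ∂P := integral_congr_ae h1
    _ = _ := rfl

lemma surrogate_key_aux {Ω : Type*} {𝒢 : MeasurableSpace Ω}
    [mΩ : MeasurableSpace Ω] [sb : StandardBorelSpace Ω]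
    (P : Measure Ω) [IsProbabilityMeasure P]
    (Z : Ω → Bool) (Y : Ω → ℝ) (hZ : Measurable Z) (hY : Measurable Y)
    (C : ℝ) (hYbdd : ∀ ω, |Y ω| ≤ C) (h𝒢 : 𝒢 ≤ mΩ)
    (hsurrogacy : CondIndepFun 𝒢 h𝒢 Y Z P) :
    ∀ z : Bool, ∫ ω in {ω | Z ω = z}, Y ω ∂P = ∫ ω in {ω | Z ω = z}, (P[Y|𝒢]) ω ∂P := by
  have hYint : Integrable Y P := by
    refine Integrable.mono' (integrable_const C) hY.aestronglyMeasurable ?_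
    exact Filter.Eventually.of_forall fun ω => by
      simpa [Real.norm_eq_abs] using hYbdd ω
  have hCI := (condIndepFun_iff_condExp_inter_preimage_eq_mul (hm' := h𝒢) (μ := P) hY hZ).mp
    hsurrogacy
  intro z
  have hB : MeasurableSet (Z ⁻¹' {z}) := hZ (measurableSet_singleton z)
  have hBeq : {ω | Z ω = z} = Z ⁻¹' {z} := rfl
  set B : Set Ω := Z ⁻¹' {z} with hBdef
  set ind : Ω → ℝ := B.indicator (fun _ => (1 : ℝ)) with hinddef
  have hindint : Integrable ind P := (integrable_const (1 : ℝ)).indicator hB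
  set h : Ω → ℝ := P[ind|𝒢] with hhdef
  have hhmeas : StronglyMeasurable[𝒢] h := stronglyMeasurable_condExp
  have hmeash : Measurable h := (hhmeas.mono h𝒢).measurable
  have hh0 : 0 ≤ᵐ[P] h :=
    condExp_nonneg (Filter.Eventually.of_forall fun ω =>
      Set.indicator_nonneg (fun _ _ => zero_le_one) ω)
  have hh1 : h ≤ᵐ[P] fun _ => (1 : ℝ) := by
    have hmono := condExp_mono (m := 𝒢) (μ := P) hindint (integrable_const (1 : ℝ))
      (Filter.Eventually.of_forall fun ω => by
        by_cases hω : ω ∈ B <;> simp [ind, Set.indicator_apply, hω])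
    rwa [condExp_const h𝒢 (1 : ℝ)] at hmono
  have hhb : ∀ᵐ ω ∂P, ‖h ω‖ ≤ 1 := by
    filter_upwards [hh0, hh1] with ω h0 h1
    have h0' : (0 : ℝ) ≤ h ω := h0
    rw [Real.norm_eq_abs, abs_le]
    exact ⟨by linarith, h1⟩
  -- real-valued identity on preimages
  have hreal : ∀ s : Set ℝ, MeasurableSet s →
      (P (Y ⁻¹' s ∩ B)).toReal
        = ∫ ω, h ω * ((Y ⁻¹' s).indicator (fun _ => (1 : ℝ))) ω ∂P := by
    intro s hs
    have hA : MeasurableSet (Y ⁻¹' s) := hY hs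
    have hindA : Integrable ((Y ⁻¹' s).indicator fun _ => (1 : ℝ)) P :=
      (integrable_const (1 : ℝ)).indicator hA
    have hprod := hCI s {z} hs (measurableSet_singleton z)
    calc (P (Y ⁻¹' s ∩ B)).toReal
        = ∫ ω, ((Y ⁻¹' s ∩ B).indicator (1 : Ω → ℝ)) ω ∂P :=
          (integral_indicator_one (μ := P) (hA.inter hB)).symm
      _ = ∫ ω, (P⟦Y ⁻¹' s ∩ Z ⁻¹' {z}|𝒢⟧) ω ∂P :=
          (integral_condExp h𝒢).symm
      _ = ∫ ω, (P⟦Y ⁻¹' s|𝒢⟧) ω * (P⟦Z ⁻¹' {z}|𝒢⟧) ω ∂P := integral_congr_ae hprod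
      _ = ∫ ω, h ω * (P⟦Y ⁻¹' s|𝒢⟧) ω ∂P := by simp_rw [mul_comm]; rfl
      _ = ∫ ω, h ω * ((Y ⁻¹' s).indicator (fun _ => (1 : ℝ))) ω ∂P :=
          (pull_out_integral' P h𝒢 hhmeas hhb hindA).symm
  -- measure-level identity
  have hne : ∀ s : Set ℝ, MeasurableSet s →
      P (Y ⁻¹' s ∩ B) = ∫⁻ ω in Y ⁻¹' s, ENNReal.ofReal (h ω) ∂P := by
    intro s hs
    have hA : MeasurableSet (Y ⁻¹' s) := hY hs
    have e1 : ∫⁻ ω in Y ⁻¹' s, ENNReal.ofReal (h ω) ∂P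
        = ENNReal.ofReal (∫ ω in Y ⁻¹' s, h ω ∂P) :=
      (ofReal_integral_eq_lintegral_ofReal (integrable_condExp.restrict)
        (ae_restrict_of_ae hh0)).symm
    have e2 : ∫ ω in Y ⁻¹' s, h ω ∂P
        = ∫ ω, h ω * ((Y ⁻¹' s).indicator (fun _ => (1 : ℝ))) ω ∂P := by
      rw [← integral_indicator hA]
      refine integral_congr_ae (Filter.Eventually.of_forall fun ω => ?_)
      by_cases hω : ω ∈ Y ⁻¹' s <;> simp [Set.indicator_apply, hω]
    rw [e1, e2, ← hreal s hs, ENNReal.ofReal_toReal (measure_ne_top P _)]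
  have hmap : (P.restrict B).map Y
      = (P.withDensity (fun ω => ENNReal.ofReal (h ω))).map Y := by
    ext s hs
    rw [Measure.map_apply hY hs, Measure.map_apply hY hs,
      Measure.restrict_apply (hY hs), withDensity_apply _ (hY hs)]
    exact hne s hs
  have hint2 : ∫ y, y ∂((P.withDensity (fun ω => ENNReal.ofReal (h ω))).map Y)
      = ∫ ω, h ω * Y ω ∂P := by
    calc ∫ y, y ∂((P.withDensity (fun ω => ENNReal.ofReal (h ω))).map Y)
        = ∫ ω, Y ω ∂(P.withDensity (fun ω => ENNReal.ofReal (h ω))) :=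
          integral_map hY.aemeasurable aestronglyMeasurable_id
      _ = ∫ ω, (h ω).toNNReal • Y ω ∂P :=
          integral_withDensity_eq_integral_smul (measurable_real_toNNReal.comp hmeash) Y
      _ = ∫ ω, h ω * Y ω ∂P := by
          refine integral_congr_ae ?_
          filter_upwards [hh0] with ω h0
          simp [NNReal.smul_def, Real.coe_toNNReal _ h0]
  have hLHS : ∫ ω in B, Y ω ∂P = ∫ ω, h ω * Y ω ∂P := by
    calc ∫ ω in B, Y ω ∂P = ∫ y, y ∂((P.restrict B).map Y) :=
          (integral_map hY.aemeasurable aestronglyMeasurable_id).symm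
      _ = ∫ y, y ∂((P.withDensity (fun ω => ENNReal.ofReal (h ω))).map Y) := by rw [hmap]
      _ = ∫ ω, h ω * Y ω ∂P := hint2
  have hgb' : ∀ᵐ ω ∂P, ‖(P[Y|𝒢]) ω‖ ≤ (C.toNNReal : ℝ) := by
    have hb : ∀ᵐ ω ∂P, |Y ω| ≤ (C.toNNReal : ℝ) :=
      Filter.Eventually.of_forall fun ω => (hYbdd ω).trans (Real.le_coe_toNNReal C)
    filter_upwards [ae_bdd_condExp_of_ae_bdd (m := 𝒢) (R := C.toNNReal) hb] with ω hω
    simpa [Real.norm_eq_abs] using hω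
  have hRHS : ∫ ω in B, (P[Y|𝒢]) ω ∂P = ∫ ω, h ω * Y ω ∂P := by
    calc ∫ ω in B, (P[Y|𝒢]) ω ∂P
        = ∫ ω, (P[Y|𝒢]) ω * ind ω ∂P := by
          rw [← integral_indicator hB]
          refine integral_congr_ae (Filter.Eventually.of_forall fun ω => ?_)
          by_cases hω : ω ∈ B <;> simp [ind, Set.indicator_apply, hω]
      _ = ∫ ω, (P[Y|𝒢]) ω * h ω ∂P :=
          pull_out_integral' P h𝒢 stronglyMeasurable_condExp hgb' hindint
      _ = ∫ ω, h ω * (P[Y|𝒢]) ω ∂P := by simp_rw [mul_comm]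
      _ = ∫ ω, h ω * Y ω ∂P := (pull_out_integral' P h𝒢 hhmeas hhb hYint).symm
  rw [hBeq, hLHS, hRHS]

/-- Identification of arm-specific means via the surrogate index in a single trial:
under surrogacy (`Y ⟂ Z ∣ σ(X,S)`), the treatment-arm-specific means of the
clinical endpoint `Y` equal those of the surrogate index `E[Y ∣ σ(X,S)]`, and hence
any contrast of arm-specific means agrees for `Y` and for the surrogate index. -/
theorem surrogate_index_identification_single_trial
    {Ω 𝒳 𝒮 : Type*} [mΩ : MeasurableSpace Ω] [sb : StandardBorelSpace Ω]
    [MeasurableSpace 𝒳] [MeasurableSpace 𝒮]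
    (P : Measure Ω) [IsProbabilityMeasure P]
    (X : Ω → 𝒳) (S : Ω → 𝒮) (Z : Ω → Bool) (Y : Ω → ℝ)
    (hX : Measurable X) (hS : Measurable S) (hZ : Measurable Z) (hY : Measurable Y)
    (C : ℝ) (hYbdd : ∀ ω, |Y ω| ≤ C)
    (𝒢 : MeasurableSpace Ω)
    (h𝒢def : 𝒢 = MeasurableSpace.comap (fun ω => (X ω, S ω)) inferInstance)
    (h𝒢 : 𝒢 ≤ mΩ)
    (hsurrogacy : @CondIndepFun Ω 𝒢 mΩ sb h𝒢 ℝ Bool _ _ Y Z P _) :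
    (∀ z : Bool, ∫ ω in {ω | Z ω = z}, Y ω ∂P = ∫ ω in {ω | Z ω = z}, (P[Y|𝒢]) ω ∂P) ∧
    (0 < P {ω | Z ω = true} → 0 < P {ω | Z ω = false} →
      ∀ f : ℝ × ℝ → ℝ,
        f ((P {ω | Z ω = true}).toReal⁻¹ * ∫ ω in {ω | Z ω = true}, Y ω ∂P,
           (P {ω | Z ω = false}).toReal⁻¹ * ∫ ω in {ω | Z ω = false}, Y ω ∂P) =
        f ((P {ω | Z ω = true}).toReal⁻¹ * ∫ ω in {ω | Z ω = true}, (P[Y|𝒢]) ω ∂P,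
           (P {ω | Z ω = false}).toReal⁻¹ * ∫ ω in {ω | Z ω = false}, (P[Y|𝒢]) ω ∂P)) := by
  have key := surrogate_key_aux (mΩ := mΩ) P Z Y hZ hY C hYbdd h𝒢 hsurrogacy
  exact ⟨key, fun _ _ f => by rw [key true, key false]⟩
end

section
/- Let (Ω, ℱ, P) be a probability space with Ω a standard Borel space, let X : Ω → 𝒳 and S : Ω → 𝒮 be measurable maps into measurable spaces, let A : Ω → {0,1} and Z : Ω → {0,1} be measurable, and let Y : Ω → ℝ be bounded and measurable. Let 𝒢 denote the σ-algebra generated by ω ↦ (X(ω), S(ω)), let 𝒜 denote the σ-algebra generated by A, and write E[Y | 𝒢] for the conditional expectation of Y given 𝒢. Assume (surrogacy) Y and Z are conditionally independent given 𝒜 ⊔ 𝒢 (the σ-algebra generated by 𝒜 and 𝒢 together), and (comparability) Y and A are conditionally independent given 𝒢. Then for every z ∈ {0,1}, ∫_{{A = 0} ∩ {Z = z}} Y dP = ∫_{{A = 0} ∩ {Z = z}} E[Y | 𝒢] dP. -/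
open MeasureTheory ProbabilityTheory Filter Set

lemma si_integrable_of_abs_le {Ω : Type*} {mΩ : MeasurableSpace Ω}
    (P : Measure Ω) [IsFiniteMeasure P] {f : Ω → ℝ}
    (hf : Measurable f) {C : ℝ} (h : ∀ ω, |f ω| ≤ C) : Integrable f P :=
  ⟨hf.aestronglyMeasurable, HasFiniteIntegral.of_bounded
    (Filter.Eventually.of_forall (fun ω => by simpa [Real.norm_eq_abs] using h ω))⟩

/-- Key lemma: if `Y` is bounded measurable, `W` Bool-valued, `Y ⟂ W ∣ m'`, and `B`
is `m'`-measurable, then the integral of `Y` over `B ∩ {W = w}` coincides with the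
integral of `E[Y|m']` there. -/
lemma si_key {Ω : Type*} {m' : MeasurableSpace Ω} {mΩ : MeasurableSpace Ω}
    [sb : StandardBorelSpace Ω]
    (P : Measure Ω) [IsProbabilityMeasure P]
    (hm' : m' ≤ mΩ)
    {Y : Ω → ℝ} (hY : Measurable Y) {C : ℝ} (hYbdd : ∀ ω, |Y ω| ≤ C)
    {W : Ω → Bool} (hW : Measurable W)
    (hci : CondIndepFun m' hm' Y W P)
    {B : Set Ω} (hB : MeasurableSet[m'] B) (w : Bool) :
    ∫ ω in B ∩ W ⁻¹' {w}, Y ω ∂P = ∫ ω in B ∩ W ⁻¹' {w}, (P[Y|m']) ω ∂P := by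
  -- replace the bound by a nonnegative one
  set D : ℝ := |C| with hD
  have hYD : ∀ ω, |Y ω| ≤ D := fun ω => (hYbdd ω).trans (le_abs_self C)
  have hD0 : 0 ≤ D := abs_nonneg C
  have hYint : Integrable Y P := si_integrable_of_abs_le P hY hYD
  set I : Set Ω := W ⁻¹' {w} with hIdef
  have hIm : MeasurableSet I := hW (measurableSet_singleton w)
  set K : Ω → ℝ := P[I.indicator (fun _ => (1:ℝ)) | m'] with hKdef
  have hBm : MeasurableSet B := hm' B hB
  have hIint : Integrable (I.indicator (fun _ => (1:ℝ))) P := (integrable_const 1).indicator hIm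
  -- |K| ≤ 1 a.e.
  have hK0 : 0 ≤ᵐ[P] K := condExp_nonneg (Filter.Eventually.of_forall fun ω =>
    Set.indicator_nonneg (fun _ _ => zero_le_one) ω)
  have hKle : K ≤ᵐ[P] P[(fun _ => (1:ℝ))|m'] :=
    condExp_mono hIint (integrable_const 1)
      (Filter.Eventually.of_forall fun ω => Set.indicator_le_self' (fun _ _ => zero_le_one) ω)
  have hK1 : ∀ᵐ ω ∂P, ‖K ω‖ ≤ 1 := by
    filter_upwards [hK0, hKle] with ω h0 hle
    rw [condExp_const hm' (1:ℝ)] at hle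
    have h0' : (0:ℝ) ≤ K ω := h0
    have hle' : K ω ≤ (1:ℝ) := hle
    rw [Real.norm_eq_abs, abs_le]
    exact ⟨by linarith, hle'⟩
  have hKmeas : AEStronglyMeasurable K P :=
    (stronglyMeasurable_condExp.mono hm').aestronglyMeasurable
  -- multiplying an integrable function by K stays integrable
  have hKmul : ∀ {g : Ω → ℝ}, Integrable g P → Integrable (fun ω => g ω * K ω) P := by
    intro g hg
    exact (hg.bdd_mul hKmeas hK1).congr (Filter.Eventually.of_forall fun ω => mul_comm _ _)
  -- |E[f|m']| ≤ E[|f| | m'] a.e.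
  have habs : ∀ {f : Ω → ℝ}, Integrable f P →
      (∀ᵐ ω ∂P, |(P[f|m']) ω| ≤ (P[(fun ω => |f ω|)|m']) ω) := by
    intro f hf
    have h1 : P[f|m'] ≤ᵐ[P] P[(fun ω => |f ω|)|m'] :=
      condExp_mono hf hf.abs (Filter.Eventually.of_forall fun ω => le_abs_self _)
    have h2 : P[(fun ω => -|f ω|)|m'] ≤ᵐ[P] P[f|m'] :=
      condExp_mono hf.abs.neg hf (Filter.Eventually.of_forall fun ω => neg_abs_le _)
    have h3 : P[(fun ω => -|f ω|)|m'] =ᵐ[P] fun ω => -((P[(fun ω => |f ω|)|m']) ω) := by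
      have := condExp_neg (μ := P) (m := m') (fun ω => |f ω|)
      exact this
    filter_upwards [h1, h2, h3] with ω h1 h2 h3
    rw [abs_le]
    refine ⟨?_, h1⟩
    rw [h3] at h2
    linarith
  -- Step A: indicator version from conditional independence
  have hstepA : ∀ s : Set ℝ, MeasurableSet s →
      ∫ ω in B, (Y ⁻¹' s ∩ I).indicator (fun _ => (1:ℝ)) ω ∂P
        = ∫ ω in B, (P[(Y ⁻¹' s).indicator (fun _ => (1:ℝ))|m']) ω * K ω ∂P := by
    intro s hs
    have h := ((condIndepFun_iff_condExp_inter_preimage_eq_mul hY hW).1 hci) s {w} hs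
      (measurableSet_singleton w)
    have hint : Integrable ((Y ⁻¹' s ∩ I).indicator (fun _ => (1:ℝ))) P :=
      (integrable_const 1).indicator ((hY hs).inter hIm)
    calc ∫ ω in B, (Y ⁻¹' s ∩ I).indicator (fun _ => (1:ℝ)) ω ∂P
        = ∫ ω in B, (P[(Y ⁻¹' s ∩ I).indicator (fun _ => (1:ℝ))|m']) ω ∂P :=
          (setIntegral_condExp hm' hint hB).symm
      _ = ∫ ω in B, (P[(Y ⁻¹' s).indicator (fun _ => (1:ℝ))|m']) ω * K ω ∂P := by
          refine setIntegral_congr_ae hBm ?_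
          filter_upwards [h] with ω hω _
          exact hω
  -- the main claim, as a predicate on f
  set Q : (Ω → ℝ) → Prop := fun f =>
    ∫ ω in B, I.indicator f ω ∂P = ∫ ω in B, (P[f|m']) ω * K ω ∂P with hQdef
  -- base case
  have hbase : ∀ (c : ℝ) (s : Set ℝ), MeasurableSet s →
      Q ((Y ⁻¹' s).indicator fun _ => c) := by
    intro c s hs
    have hA' := hstepA s hs
    have hLHS : ∀ ω, I.indicator ((Y ⁻¹' s).indicator fun _ => c) ω
        = c * (Y ⁻¹' s ∩ I).indicator (fun _ => (1:ℝ)) ω := by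
      intro ω
      by_cases hI : ω ∈ I <;> by_cases hY' : ω ∈ Y ⁻¹' s <;>
        simp [Set.indicator_apply, hI, hY', Set.mem_inter_iff]
    have hsmul : ((Y ⁻¹' s).indicator fun _ => c)
        = c • ((Y ⁻¹' s).indicator fun _ => (1:ℝ)) := by
      funext ω
      by_cases hY' : ω ∈ Y ⁻¹' s <;> simp [Set.indicator_apply, hY']
    have hRHS : (P[(Y ⁻¹' s).indicator fun _ => c|m'])
        =ᵐ[P] fun ω => c * (P[(Y ⁻¹' s).indicator fun _ => (1:ℝ)|m']) ω := by
      rw [hsmul]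
      have := condExp_smul (μ := P) (m := m') c ((Y ⁻¹' s).indicator fun _ => (1:ℝ))
      filter_upwards [this] with ω hω
      simpa using hω
    show ∫ ω in B, I.indicator ((Y ⁻¹' s).indicator fun _ => c) ω ∂P
        = ∫ ω in B, (P[(Y ⁻¹' s).indicator fun _ => c|m']) ω * K ω ∂P
    calc ∫ ω in B, I.indicator ((Y ⁻¹' s).indicator fun _ => c) ω ∂P
        = ∫ ω in B, c * (Y ⁻¹' s ∩ I).indicator (fun _ => (1:ℝ)) ω ∂P := by
          exact integral_congr_ae (Filter.Eventually.of_forall fun ω => hLHS ω)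
      _ = c * ∫ ω in B, (Y ⁻¹' s ∩ I).indicator (fun _ => (1:ℝ)) ω ∂P := by
          rw [integral_const_mul]
      _ = c * ∫ ω in B, (P[(Y ⁻¹' s).indicator (fun _ => (1:ℝ))|m']) ω * K ω ∂P := by
          rw [hA']
      _ = ∫ ω in B, c * ((P[(Y ⁻¹' s).indicator (fun _ => (1:ℝ))|m']) ω * K ω) ∂P := by
          rw [integral_const_mul]
      _ = ∫ ω in B, (P[(Y ⁻¹' s).indicator fun _ => c|m']) ω * K ω ∂P := by
          refine setIntegral_congr_ae hBm ?_
          filter_upwards [hRHS] with ω hω _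
          rw [hω]; ring
  -- additivity
  have hadd : ∀ {f g : Ω → ℝ}, Integrable f P → Integrable g P → Q f → Q g → Q (f + g) := by
    intro f g hf hg hQf hQg
    have hce := condExp_add (μ := P) (m := m') hf hg
    show ∫ ω in B, I.indicator (f + g) ω ∂P = ∫ ω in B, (P[f + g|m']) ω * K ω ∂P
    calc ∫ ω in B, I.indicator (f + g) ω ∂P
        = ∫ ω in B, (I.indicator f ω + I.indicator g ω) ∂P := by
          refine integral_congr_ae (Filter.Eventually.of_forall fun ω => ?_)
          by_cases hI : ω ∈ I <;> simp [Set.indicator_apply, hI]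
      _ = ∫ ω in B, I.indicator f ω ∂P + ∫ ω in B, I.indicator g ω ∂P :=
          integral_add ((hf.indicator hIm).integrableOn) ((hg.indicator hIm).integrableOn)
      _ = ∫ ω in B, (P[f|m']) ω * K ω ∂P + ∫ ω in B, (P[g|m']) ω * K ω ∂P := by
          rw [hQf, hQg]
      _ = ∫ ω in B, ((P[f|m']) ω * K ω + (P[g|m']) ω * K ω) ∂P :=
          (integral_add ((hKmul integrable_condExp).integrableOn)
            ((hKmul integrable_condExp).integrableOn)).symm
      _ = ∫ ω in B, (P[f + g|m']) ω * K ω ∂P := by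
          refine setIntegral_congr_ae hBm ?_
          filter_upwards [hce] with ω hω _
          rw [hω]
          simp [add_mul]
  -- all simple functions of Y
  have hsimple : ∀ φ : SimpleFunc ℝ ℝ, Q (fun ω => φ (Y ω)) := by
    intro φ
    induction φ using SimpleFunc.induction with
    | const c hs =>
      rename_i s
      have : (fun ω => (SimpleFunc.piecewise s hs (SimpleFunc.const ℝ c)
          (SimpleFunc.const ℝ 0)) (Y ω)) = (Y ⁻¹' s).indicator fun _ => c := by
        funext ω
        classical
        by_cases hY' : Y ω ∈ s <;>
          simp [SimpleFunc.piecewise_apply, Set.indicator_apply, hY']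
      rw [this]
      exact hbase c s hs
    | add hdisj h1 h2 =>
      rename_i φ₁ φ₂
      have hint : ∀ ψ : SimpleFunc ℝ ℝ, Integrable (fun ω => ψ (Y ω)) P := by
        intro ψ
        obtain ⟨c, hc⟩ := ψ.exists_forall_norm_le
        exact si_integrable_of_abs_le P (ψ.measurable.comp hY)
          (fun ω => by simpa [Real.norm_eq_abs] using hc (Y ω))
      have : (fun ω => (φ₁ + φ₂) (Y ω))
          = (fun ω => φ₁ (Y ω)) + (fun ω => φ₂ (Y ω)) := by
        funext ω; simp
      rw [this]
      exact hadd (hint φ₁) (hint φ₂) h1 h2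
  -- approximation of Y by simple functions of Y
  set φ : ℕ → SimpleFunc ℝ ℝ := fun n =>
    SimpleFunc.approxOn id measurable_id Set.univ 0 (Set.mem_univ 0) n with hφdef
  set f : ℕ → Ω → ℝ := fun n ω => φ n (Y ω) with hfdef
  have hfmeas : ∀ n, Measurable (f n) := fun n => (φ n).measurable.comp hY
  have hfbd : ∀ n ω, ‖f n ω‖ ≤ D + D := by
    intro n ω
    refine (SimpleFunc.norm_approxOn_zero_le measurable_id (Set.mem_univ 0) (Y ω) n).trans ?_
    have h := hYD ω
    simp only [id_eq, Real.norm_eq_abs]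
    linarith
  have hftend : ∀ ω, Tendsto (fun n => f n ω) atTop (nhds (Y ω)) := by
    intro ω
    have := SimpleFunc.tendsto_approxOn (f := (id : ℝ → ℝ)) measurable_id
      (Set.mem_univ 0) (x := Y ω) (by simp)
    simpa using this
  have hfint : ∀ n, Integrable (f n) P := fun n =>
    si_integrable_of_abs_le P (hfmeas n)
      (fun ω => by simpa [Real.norm_eq_abs] using hfbd n ω)
  -- the left-hand sequence converges
  have hLtend : Tendsto (fun n => ∫ ω in B, I.indicator (f n) ω ∂P) atTop
      (nhds (∫ ω in B, I.indicator Y ω ∂P)) := by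
    refine tendsto_integral_of_dominated_convergence (fun _ => D + D)
      (fun n => ((hfmeas n).indicator hIm).aestronglyMeasurable) (integrable_const _)
      (fun n => Filter.Eventually.of_forall fun ω => ?_)
      (Filter.Eventually.of_forall fun ω => ?_)
    · by_cases hI : ω ∈ I
      · simpa [Set.indicator_of_mem hI] using hfbd n ω
      · simp only [Set.indicator_of_notMem hI]
        simp only [norm_zero]
        linarith
    · by_cases hI : ω ∈ I
      · simpa [Set.indicator_of_mem hI] using hftend ω
      · simp [Set.indicator_of_notMem hI]
  -- the right-hand sequence converges
  have hint_abs : Tendsto (fun n => ∫ ω, |f n ω - Y ω| ∂P) atTop (nhds 0) := by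
    have h0 : (0:ℝ) = ∫ _ω, (0:ℝ) ∂P := by simp
    rw [h0]
    refine tendsto_integral_of_dominated_convergence (fun _ => D + D + D)
      (fun n => (((hfmeas n).sub hY).abs).aestronglyMeasurable)
      (integrable_const _)
      (fun n => Filter.Eventually.of_forall fun ω => ?_)
      (Filter.Eventually.of_forall fun ω => ?_)
    · have h1 := hfbd n ω
      have h2 := hYD ω
      rw [Real.norm_eq_abs] at h1
      rw [Real.norm_eq_abs, abs_abs]
      refine (abs_sub _ _).trans ?_
      show |f n ω| + |Y ω| ≤ D + D + D
      linarith
    · have : Tendsto (fun n => f n ω - Y ω) atTop (nhds (Y ω - Y ω)) :=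
        (hftend ω).sub tendsto_const_nhds
      rw [sub_self] at this
      simpa using this.abs
  have hRtend : Tendsto (fun n => ∫ ω in B, (P[f n|m']) ω * K ω ∂P) atTop
      (nhds (∫ ω in B, (P[Y|m']) ω * K ω ∂P)) := by
    rw [tendsto_iff_dist_tendsto_zero]
    refine squeeze_zero (fun n => dist_nonneg) (fun n => ?_) hint_abs
    have hsub : Integrable (fun ω => f n ω - Y ω) P := (hfint n).sub hYint
    have hexpand : ∫ ω in B, (P[f n|m']) ω * K ω ∂P - ∫ ω in B, (P[Y|m']) ω * K ω ∂P
        = ∫ ω in B, ((P[f n|m']) ω - (P[Y|m']) ω) * K ω ∂P := by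
      rw [← integral_sub ((hKmul integrable_condExp).integrableOn)
        ((hKmul integrable_condExp).integrableOn)]
      refine integral_congr_ae (Filter.Eventually.of_forall fun ω => ?_)
      ring
    rw [Real.dist_eq, hexpand]
    have hg0int : Integrable (fun ω => ((P[f n|m']) ω - (P[Y|m']) ω) * K ω) P := by
      have : Integrable (fun ω => (P[f n|m']) ω - (P[Y|m']) ω) P :=
        integrable_condExp.sub integrable_condExp
      exact (this.bdd_mul hKmeas hK1).congr
        (Filter.Eventually.of_forall fun ω => mul_comm _ _)
    have hceq : P[(fun ω => f n ω - Y ω)|m']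
        =ᵐ[P] fun ω => (P[f n|m']) ω - (P[Y|m']) ω := by
      have h := condExp_sub (μ := P) (m := m') (hfint n) hYint
      filter_upwards [h] with ω hω
      exact hω
    calc |∫ ω in B, ((P[f n|m']) ω - (P[Y|m']) ω) * K ω ∂P|
        ≤ ∫ ω in B, |(P[f n|m']) ω - (P[Y|m']) ω| * |K ω| ∂P := by
          simpa [Real.norm_eq_abs, abs_mul] using
            norm_integral_le_integral_norm (μ := P.restrict B)
              (fun ω => ((P[f n|m']) ω - (P[Y|m']) ω) * K ω)
      _ ≤ ∫ ω in B, (P[(fun ω => |f n ω - Y ω|)|m']) ω ∂P := by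
          refine integral_mono_ae
            ((hg0int.abs.congr (Filter.Eventually.of_forall fun ω =>
              (abs_mul _ _))).integrableOn)
            integrable_condExp.integrableOn ?_
          refine ae_restrict_of_ae ?_
          filter_upwards [hK1, hceq, habs hsub] with ω hK hceω habsω
          rw [Real.norm_eq_abs] at hK
          have h1 : |(P[f n|m']) ω - (P[Y|m']) ω|
              = |(P[(fun ω => f n ω - Y ω)|m']) ω| := by rw [hceω]
          have h2 : |(P[(fun ω => f n ω - Y ω)|m']) ω|
              ≤ (P[(fun ω => |f n ω - Y ω|)|m']) ω := habsω
          nlinarith [abs_nonneg ((P[f n|m']) ω - (P[Y|m']) ω), abs_nonneg (K ω)]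
      _ ≤ ∫ ω, (P[(fun ω => |f n ω - Y ω|)|m']) ω ∂P := by
          refine setIntegral_le_integral integrable_condExp ?_
          exact condExp_nonneg (Filter.Eventually.of_forall fun ω => abs_nonneg _)
      _ = ∫ ω, |f n ω - Y ω| ∂P := integral_condExp hm'
  -- pass to the limit in Q
  have hQY : ∫ ω in B, I.indicator Y ω ∂P = ∫ ω in B, (P[Y|m']) ω * K ω ∂P := by
    have heq : ∀ n, ∫ ω in B, I.indicator (f n) ω ∂P
        = ∫ ω in B, (P[f n|m']) ω * K ω ∂P := fun n => hsimple (φ n)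
    exact tendsto_nhds_unique (hLtend.congr fun n => (heq n)) hRtend
  -- pull-out property for the RHS
  have hprod : Integrable (fun ω => (P[Y|m']) ω * I.indicator (fun _ => (1:ℝ)) ω) P := by
    refine (integrable_condExp.bdd_mul (c := 1)
      hIint.aestronglyMeasurable ?_).congr (Filter.Eventually.of_forall fun ω => mul_comm _ _)
    refine Filter.Eventually.of_forall fun ω => ?_
    by_cases hI : ω ∈ I <;> simp [Set.indicator_apply, hI]
  have hpull : ∫ ω in B, (P[Y|m']) ω * I.indicator (fun _ => (1:ℝ)) ω ∂P
      = ∫ ω in B, (P[Y|m']) ω * K ω ∂P := by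
    have hmul := condExp_mul_of_stronglyMeasurable_left (μ := P) (m := m')
      (stronglyMeasurable_condExp (f := Y)) (by
        refine hprod.congr (Filter.Eventually.of_forall fun ω => rfl)) hIint
    calc ∫ ω in B, (P[Y|m']) ω * I.indicator (fun _ => (1:ℝ)) ω ∂P
        = ∫ ω in B, (P[(P[Y|m']) * I.indicator (fun _ => (1:ℝ))|m']) ω ∂P := by
          refine (setIntegral_condExp hm' ?_ hB).symm
          exact hprod.congr (Filter.Eventually.of_forall fun ω => rfl)
      _ = ∫ ω in B, (P[Y|m']) ω * K ω ∂P := by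
          refine setIntegral_congr_ae hBm ?_
          filter_upwards [hmul] with ω hω _
          rw [hω]
          simp [hKdef]
  -- put everything together
  calc ∫ ω in B ∩ I, Y ω ∂P
      = ∫ ω in B, I.indicator Y ω ∂P := (setIntegral_indicator hIm).symm
    _ = ∫ ω in B, (P[Y|m']) ω * K ω ∂P := hQY
    _ = ∫ ω in B, (P[Y|m']) ω * I.indicator (fun _ => (1:ℝ)) ω ∂P := hpull.symm
    _ = ∫ ω in B, I.indicator (P[Y|m']) ω ∂P := by
        refine integral_congr_ae (Filter.Eventually.of_forall fun ω => ?_)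
        by_cases hI : ω ∈ I <;> simp [Set.indicator_apply, hI]
    _ = ∫ ω in B ∩ I, (P[Y|m']) ω ∂P := setIntegral_indicator hIm

theorem si_main
    {Ω 𝒳 𝒮 : Type*} (𝒢 𝒜 : MeasurableSpace Ω)
    [mΩ : MeasurableSpace Ω] [sb : StandardBorelSpace Ω]
    [MeasurableSpace 𝒳] [MeasurableSpace 𝒮]
    (P : Measure Ω) [IsProbabilityMeasure P]
    (X : Ω → 𝒳) (S : Ω → 𝒮) (A Z : Ω → Bool) (Y : Ω → ℝ)
    (hX : Measurable X) (hS : Measurable S) (hA : Measurable A) (hZ : Measurable Z)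
    (hY : Measurable Y) (C : ℝ) (hYbdd : ∀ ω, |Y ω| ≤ C)
    (h𝒢def : 𝒢 = MeasurableSpace.comap (fun ω => (X ω, S ω)) inferInstance)
    (h𝒜def : 𝒜 = MeasurableSpace.comap A inferInstance)
    (h𝒢 : 𝒢 ≤ mΩ) (h𝒜𝒢 : 𝒜 ⊔ 𝒢 ≤ mΩ)
    (hsurrogacy : @CondIndepFun Ω (𝒜 ⊔ 𝒢) mΩ sb h𝒜𝒢 ℝ Bool _ _ Y Z P _)
    (hcomparability : @CondIndepFun Ω 𝒢 mΩ sb h𝒢 ℝ Bool _ _ Y A P _) :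
    ∀ z : Bool,
      ∫ ω in {ω | A ω = false ∧ Z ω = z}, Y ω ∂P =
        ∫ ω in {ω | A ω = false ∧ Z ω = z}, (P[Y|𝒢]) ω ∂P := by
  intro z
  have hYint : Integrable Y P := si_integrable_of_abs_le P hY hYbdd
  have hq : Measurable[mΩ] (fun ω => (X ω, S ω)) := hX.prodMk hS
  -- the sup σ-algebra is the comap of the combined map
  have hsup : (𝒜 ⊔ 𝒢)
      = MeasurableSpace.comap (fun ω => (A ω, (X ω, S ω))) inferInstance := by
    rw [h𝒜def, h𝒢def]
    have : (inferInstance : MeasurableSpace (Bool × (𝒳 × 𝒮)))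
        = MeasurableSpace.comap Prod.fst inferInstance
          ⊔ MeasurableSpace.comap Prod.snd inferInstance := rfl
    rw [this, MeasurableSpace.comap_sup, MeasurableSpace.comap_comp,
      MeasurableSpace.comap_comp]
    rfl
  -- comparability: E[Y|𝒢] = E[Y|𝒜 ⊔ 𝒢] a.e.
  have h2 : (P[Y|𝒢]) =ᵐ[P] (P[Y|𝒜 ⊔ 𝒢]) := by
    refine ae_eq_condExp_of_forall_setIntegral_eq h𝒜𝒢 hYint
      (fun s _ _ => integrable_condExp.integrableOn) ?_ ?_
    · intro s hs _
      rw [hsup] at hs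
      obtain ⟨u, hu, rfl⟩ := hs
      have hu0 : MeasurableSet {y : 𝒳 × 𝒮 | (false, y) ∈ u} := measurable_prodMk_left hu
      have hu1 : MeasurableSet {y : 𝒳 × 𝒮 | (true, y) ∈ u} := measurable_prodMk_left hu
      have hg0 : MeasurableSet[𝒢] ((fun ω => (X ω, S ω)) ⁻¹' {y | (false, y) ∈ u}) := by
        rw [h𝒢def]; exact ⟨_, hu0, rfl⟩
      have hg1 : MeasurableSet[𝒢] ((fun ω => (X ω, S ω)) ⁻¹' {y | (true, y) ∈ u}) := by
        rw [h𝒢def]; exact ⟨_, hu1, rfl⟩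
      have hsplit : (fun ω => (A ω, (X ω, S ω))) ⁻¹' u
          = ((fun ω => (X ω, S ω)) ⁻¹' {y | (false, y) ∈ u} ∩ A ⁻¹' {false})
            ∪ ((fun ω => (X ω, S ω)) ⁻¹' {y | (true, y) ∈ u} ∩ A ⁻¹' {true}) := by
        ext ω
        cases hAω : A ω <;> simp [hAω]
      have hk0 := si_key P h𝒢 hY hYbdd hA hcomparability hg0 false
      have hk1 := si_key P h𝒢 hY hYbdd hA hcomparability hg1 true
      have hm0 : MeasurableSet[mΩ] ((fun ω => (X ω, S ω)) ⁻¹' {y | (false, y) ∈ u}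
          ∩ A ⁻¹' {false}) := (hq hu0).inter (hA (measurableSet_singleton false))
      have hm1 : MeasurableSet[mΩ] ((fun ω => (X ω, S ω)) ⁻¹' {y | (true, y) ∈ u}
          ∩ A ⁻¹' {true}) := (hq hu1).inter (hA (measurableSet_singleton true))
      have hdisj : Disjoint ((fun ω => (X ω, S ω)) ⁻¹' {y | (false, y) ∈ u} ∩ A ⁻¹' {false})
          ((fun ω => (X ω, S ω)) ⁻¹' {y | (true, y) ∈ u} ∩ A ⁻¹' {true}) := by
        rw [Set.disjoint_left]
        rintro ω ⟨_, h0⟩ ⟨_, h1⟩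
        simp only [Set.mem_preimage, Set.mem_singleton_iff] at h0 h1
        rw [h0] at h1
        exact Bool.false_ne_true h1
      rw [hsplit, setIntegral_union hdisj hm1 integrable_condExp.integrableOn
        integrable_condExp.integrableOn,
        setIntegral_union hdisj hm1 hYint.integrableOn hYint.integrableOn,
        ← hk0, ← hk1]
    · exact ((stronglyMeasurable_condExp (m := 𝒢) (μ := P) (f := Y)).mono
        (le_sup_right : 𝒢 ≤ 𝒜 ⊔ 𝒢)).aestronglyMeasurable
  -- surrogacy: key lemma applied on the set {A = false}
  have hIA : MeasurableSet[𝒜] (A ⁻¹' {false}) := by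
    rw [h𝒜def]; exact ⟨{false}, measurableSet_singleton false, rfl⟩
  have hB1 : MeasurableSet[𝒜 ⊔ 𝒢] (A ⁻¹' {false}) :=
    (le_sup_left : 𝒜 ≤ 𝒜 ⊔ 𝒢) _ hIA
  have h1 := si_key P h𝒜𝒢 hY hYbdd hZ hsurrogacy hB1 z
  have hTset : {ω | A ω = false ∧ Z ω = z} = A ⁻¹' {false} ∩ Z ⁻¹' {z} := by
    ext ω; simp [Set.mem_inter_iff]
  have hTmeas : MeasurableSet[mΩ] (A ⁻¹' {false} ∩ Z ⁻¹' {z}) :=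
    (hA (measurableSet_singleton false)).inter (hZ (measurableSet_singleton z))
  rw [hTset, h1]
  refine setIntegral_congr_ae hTmeas ?_
  filter_upwards [h2] with ω hω _
  exact hω.symm


/-- Identification result of the surrogate-index framework with two data sources:
under surrogacy (`Y ⟂ Z ∣ σ(A) ⊔ σ(X,S)`) and comparability (`Y ⟂ A ∣ σ(X,S)`),
the treatment-arm-specific means of the clinical endpoint `Y` in the experimental
study (`A = 0`) are identified by the corresponding means of the surrogate index
`E[Y ∣ σ(X,S)]`. -/
theorem surrogate_index_identification_two_sources
    {Ω 𝒳 𝒮 : Type*} [mΩ : MeasurableSpace Ω] [sb : StandardBorelSpace Ω]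
    [MeasurableSpace 𝒳] [MeasurableSpace 𝒮]
    (P : Measure Ω) [IsProbabilityMeasure P]
    (X : Ω → 𝒳) (S : Ω → 𝒮) (A Z : Ω → Bool) (Y : Ω → ℝ)
    (hX : Measurable X) (hS : Measurable S) (hA : Measurable A) (hZ : Measurable Z)
    (hY : Measurable Y) (C : ℝ) (hYbdd : ∀ ω, |Y ω| ≤ C)
    (𝒢 𝒜 : MeasurableSpace Ω)
    (h𝒢def : 𝒢 = MeasurableSpace.comap (fun ω => (X ω, S ω)) inferInstance)
    (h𝒜def : 𝒜 = MeasurableSpace.comap A inferInstance)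
    (h𝒢 : 𝒢 ≤ mΩ) (h𝒜𝒢 : 𝒜 ⊔ 𝒢 ≤ mΩ)
    (hsurrogacy : @CondIndepFun Ω (𝒜 ⊔ 𝒢) mΩ sb h𝒜𝒢 ℝ Bool _ _ Y Z P _)
    (hcomparability : @CondIndepFun Ω 𝒢 mΩ sb h𝒢 ℝ Bool _ _ Y A P _) :
    ∀ z : Bool,
      ∫ ω in {ω | A ω = false ∧ Z ω = z}, Y ω ∂P =
        ∫ ω in {ω | A ω = false ∧ Z ω = z}, (P[Y|𝒢]) ω ∂P :=
  si_main (mΩ := mΩ) (sb := sb) 𝒢 𝒜 P X S A Z Y hX hS hA hZ hY C hYbdd h𝒢def h𝒜def h𝒢 h𝒜𝒢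
    hsurrogacy hcomparability
end

section
/- Let (𝔻, d) be a metric space, 𝒢 ⊆ 𝔻, p ≥ 1, Θ ⊆ ℝᵖ, and let Φ : 𝔻 → ℝᵖ → ℝᵖ and θ₀ : 𝒢 → Θ satisfy Φ(g)(θ₀(g)) = 0 for every g ∈ 𝒢. Fix g* ∈ 𝒢 and assume: (i) for every sequence (θ_N) in Θ, if Φ(g*)(θ_N) → 0 then θ_N → θ₀(g*); and (vi) there exists L ≥ 0 such that for all g₁, g₂ ∈ 𝒢 and all θ ∈ Θ, ‖Φ(g₁)(θ) − Φ(g₂)(θ)‖₂ ≤ L·d(g₁, g₂). Then for every sequence (g_N) in 𝒢 with d(g_N, g*) → 0, one has θ₀(g_N) → θ₀(g*); that is, the map g ↦ θ₀(g) is (sequentially) continuous at g*. -/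
open Filter

/-- Continuity of the data-adaptive target parameter in the indexing function:
under identifiability at `g*` (condition (i)) and uniform Lipschitz continuity of
the expected estimating function in `g` (condition (vi)), the root map `g ↦ θ₀(g)`
is sequentially continuous at `g*` along sequences in `𝒢`. -/
theorem root_map_continuous_at_gstar
    {𝔻 : Type*} [MetricSpace 𝔻] {p : ℕ} (hp : 1 ≤ p)
    (𝒢 : Set 𝔻) (Θ : Set (EuclideanSpace ℝ (Fin p)))
    (Φ : 𝔻 → EuclideanSpace ℝ (Fin p) → EuclideanSpace ℝ (Fin p))
    (θ₀ : 𝔻 → EuclideanSpace ℝ (Fin p))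
    (hθ₀mem : ∀ g ∈ 𝒢, θ₀ g ∈ Θ)
    (hroot : ∀ g ∈ 𝒢, Φ g (θ₀ g) = 0)
    (gstar : 𝔻) (hgstar : gstar ∈ 𝒢)
    -- condition (i): identifiability at `g*`
    (hident : ∀ θN : ℕ → EuclideanSpace ℝ (Fin p), (∀ N, θN N ∈ Θ) →
      Tendsto (fun N => Φ gstar (θN N)) atTop (nhds 0) →
      Tendsto θN atTop (nhds (θ₀ gstar)))
    -- condition (vi): uniform Lipschitz continuity in `g`
    (hLip : ∃ L : ℝ, 0 ≤ L ∧ ∀ g₁ ∈ 𝒢, ∀ g₂ ∈ 𝒢, ∀ θ ∈ Θ,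
      ‖Φ g₁ θ - Φ g₂ θ‖ ≤ L * dist g₁ g₂) :
    ∀ gN : ℕ → 𝔻, (∀ N, gN N ∈ 𝒢) →
      Tendsto (fun N => dist (gN N) gstar) atTop (nhds 0) →
      Tendsto (fun N => θ₀ (gN N)) atTop (nhds (θ₀ gstar)) := by
  intro gN hgN hd
  obtain ⟨L, hL0, hL⟩ := hLip
  apply hident _ (fun N => hθ₀mem _ (hgN N))
  rw [tendsto_zero_iff_norm_tendsto_zero]
  have hb : ∀ N, ‖Φ gstar (θ₀ (gN N))‖ ≤ L * dist (gN N) gstar := by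
    intro N
    have := hL gstar hgstar (gN N) (hgN N) _ (hθ₀mem _ (hgN N))
    rwa [hroot _ (hgN N), sub_zero, dist_comm] at this
  have hL' : Tendsto (fun N => L * dist (gN N) gstar) atTop (nhds 0) := by
    simpa using hd.const_mul L
  exact squeeze_zero (fun N => norm_nonneg _) hb hL'
end
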